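/- Let k ∈ {−1,0,1}, ε, n ∈ {0,1} with εn = εk = 0, and let a, b : ℝ → (0,∞) be C¹. Then the vector field η₄ with components (η₄⁰, η₄¹, η₄², η₄³) = e^{εz}(0, cos φ, −f(r) sin φ, −g(r) sin φ) in coordinates (t,r,φ,z) is a Killing vector field of the metric G on U = {(t,r,φ,z) : Σ(r,k) > 0}, i.e. for all indices α, β ∈ {0,1,2,3} and all points of U: Σ_μ (η₄^μ ∂_μ G_{αβ} + G_{μβ} ∂_α η₄^μ + G_{αμ} ∂_β η₄^μ) = 0. -/

import Mathlib

/-- `Σ(y,k)`: `sin y` for `k = 1`, `y` for `k = 0`, `sinh y` for `k = −1`. -/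
noncomputable def Sig (k y : ℝ) : ℝ :=
  if k = 1 then Real.sin y else if k = 0 then y else Real.sinh y

/-- `Σ_{,y}(y,k)`: `cos y` for `k = 1`, `1` for `k = 0`, `cosh y` for `k = −1`. -/
noncomputable def Sigr (k y : ℝ) : ℝ :=
  if k = 1 then Real.cos y else if k = 0 then 1 else Real.cosh y

/-- `F(y,k)`: `−cos y` for `k = 1`, `y²/2` for `k = 0`, `cosh y` for `k = −1`. -/
noncomputable def Ffun (k y : ℝ) : ℝ :=
  if k = 1 then -Real.cos y else if k = 0 then y ^ 2 / 2 else Real.cosh y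

/-- `f(r) = Σ_{,r}(r,k)/Σ(r,k)`. -/
noncomputable def ffun (k r : ℝ) : ℝ := Sigr k r / Sig k r

/-- `g(r) = n(Σ(r,k) − f(r)(F(r,k)+k))`. -/
noncomputable def gfun (k n r : ℝ) : ℝ :=
  n * (Sig k r - ffun k r * (Ffun k r + k))

/-- Coefficient matrix of the cylindrical LRS line element
`−dt² + a²(dz + n(F(r,k)+k)dφ)² + b²[(dr − εr dz)² + Σ(r,k)²dφ²]` in coordinates
`(t,r,φ,z) = (q 0, q 1, q 2, q 3)`. -/
noncomputable def gcyl (k ε n : ℝ) (a b : ℝ → ℝ) (q : Fin 4 → ℝ) :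
    Matrix (Fin 4) (Fin 4) ℝ :=
  !![-1, 0, 0, 0;
     0, (b (q 0)) ^ 2, 0, -ε * q 1 * (b (q 0)) ^ 2;
     0, 0, (a (q 0)) ^ 2 * (n * (Ffun k (q 1) + k)) ^ 2 +
       (b (q 0)) ^ 2 * (Sig k (q 1)) ^ 2,
       (a (q 0)) ^ 2 * n * (Ffun k (q 1) + k);
     0, -ε * q 1 * (b (q 0)) ^ 2, (a (q 0)) ^ 2 * n * (Ffun k (q 1) + k),
       (a (q 0)) ^ 2 + ε ^ 2 * (q 1) ^ 2 * (b (q 0)) ^ 2]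

/-- A vector field `X` is a Killing vector field of the metric components `G` at the
point `q` if `Σ_μ (X^μ ∂_μ G_{αβ} + G_{μβ} ∂_α X^μ + G_{αμ} ∂_β X^μ) = 0` for all
`α, β`, where `∂_μ` is the partial derivative in the `μ`-th coordinate direction. -/
def IsKillingAt (G : (Fin 4 → ℝ) → Matrix (Fin 4) (Fin 4) ℝ)
    (X : (Fin 4 → ℝ) → (Fin 4 → ℝ)) (q : Fin 4 → ℝ) : Prop :=
  ∀ α β : Fin 4,
    (∑ μ : Fin 4,
      (X q μ * fderiv ℝ (fun p => G p α β) q (Pi.single μ 1) +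
        G q μ β * fderiv ℝ (fun p => X p μ) q (Pi.single α 1) +
        G q α μ * fderiv ℝ (fun p => X p μ) q (Pi.single β 1))) = 0

/-- The vector field `η₄ = e^{εz}[cos φ ∂_r − sin φ(f(r)∂_φ + g(r)∂_z)]` in coordinates
`(t,r,φ,z)`. -/
noncomputable def eta4 (k ε n : ℝ) (q : Fin 4 → ℝ) : Fin 4 → ℝ :=
  ![0, Real.exp (ε * q 3) * Real.cos (q 2),
    -(Real.exp (ε * q 3) * ffun k (q 1) * Real.sin (q 2)),
    -(Real.exp (ε * q 3) * gfun k n (q 1) * Real.sin (q 2))]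

section Helpers

lemma hasDerivAt_Sig {k : ℝ} (hk : k = -1 ∨ k = 0 ∨ k = 1) (r : ℝ) :
    HasDerivAt (Sig k) (Sigr k r) r := by
  rcases hk with h|h|h <;> subst h <;> unfold Sig Sigr <;> norm_num
  · exact Real.hasDerivAt_sinh r
  · exact hasDerivAt_id r
  · exact Real.hasDerivAt_sin r

lemma hasDerivAt_Sigr {k : ℝ} (hk : k = -1 ∨ k = 0 ∨ k = 1) (r : ℝ) :
    HasDerivAt (Sigr k) (-(k * Sig k r)) r := by
  rcases hk with h|h|h <;> subst h <;> unfold Sig Sigr <;> norm_num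
  · simpa using Real.hasDerivAt_cosh r
  · exact hasDerivAt_const r 1
  · exact Real.hasDerivAt_cos r

lemma hasDerivAt_Ffun {k : ℝ} (hk : k = -1 ∨ k = 0 ∨ k = 1) (r : ℝ) :
    HasDerivAt (Ffun k ·) (Sig k r) r := by
  rcases hk with h|h|h <;> subst h <;> unfold Ffun Sig <;> norm_num
  · exact Real.hasDerivAt_cosh r
  · simpa using ((hasDerivAt_id r).pow 2).div_const 2
  · simpa using (Real.hasDerivAt_cos r).fun_neg

lemma sigr_sq {k : ℝ} (hk : k = -1 ∨ k = 0 ∨ k = 1) (r : ℝ) :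
    Sigr k r ^ 2 = 1 - k * Sig k r ^ 2 := by
  rcases hk with h|h|h <;> subst h <;> unfold Sig Sigr <;> norm_num
  · rw [Real.cosh_sq]; ring
  · rw [Real.cos_sq']

lemma hasDerivAt_ffun {k : ℝ} (hk : k = -1 ∨ k = 0 ∨ k = 1) {r : ℝ}
    (h : Sig k r ≠ 0) : HasDerivAt (ffun k) (-(1 / Sig k r ^ 2)) r := by
  have := (hasDerivAt_Sigr hk r).div (hasDerivAt_Sig hk r) h
  refine this.congr_deriv ?_
  have hs := sigr_sq hk r
  field_simp
  nlinarith [hs]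

lemma hasDerivAt_gfun {k n : ℝ} (hk : k = -1 ∨ k = 0 ∨ k = 1) {r : ℝ}
    (h : Sig k r ≠ 0) :
    HasDerivAt (gfun k n) (n * (Ffun k r + k) / Sig k r ^ 2) r := by
  have := (((hasDerivAt_Sig hk r).sub
    ((hasDerivAt_ffun hk h).mul ((hasDerivAt_Ffun hk r).add_const k))).const_mul n)
  refine this.congr_deriv ?_
  unfold ffun
  field_simp
  ring

lemma fderiv_G2 (h0 h1 j0 j1 : ℝ → ℝ) (d0 d1 e0 e1 : ℝ) (q : Fin 4 → ℝ) (μ : Fin 4)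
    (H0 : HasDerivAt h0 d0 (q 0)) (H1 : HasDerivAt h1 d1 (q 1))
    (J0 : HasDerivAt j0 e0 (q 0)) (J1 : HasDerivAt j1 e1 (q 1)) :
    fderiv ℝ (fun p : Fin 4 → ℝ => h0 (p 0) * h1 (p 1) + j0 (p 0) * j1 (p 1)) q
      (Pi.single μ 1) =
    ![d0 * h1 (q 1) + e0 * j1 (q 1), h0 (q 0) * d1 + j0 (q 0) * e1, 0, 0] μ := by
  have hp0 : HasFDerivAt (fun p : Fin 4 → ℝ => p 0)
      (ContinuousLinearMap.proj (R := ℝ) (φ := fun _ : Fin 4 => ℝ) 0) q :=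
    (ContinuousLinearMap.proj (R := ℝ) (φ := fun _ : Fin 4 => ℝ) 0).hasFDerivAt
  have hp1 : HasFDerivAt (fun p : Fin 4 → ℝ => p 1)
      (ContinuousLinearMap.proj (R := ℝ) (φ := fun _ : Fin 4 => ℝ) 1) q :=
    (ContinuousLinearMap.proj (R := ℝ) (φ := fun _ : Fin 4 => ℝ) 1).hasFDerivAt
  have A0 := H0.hasFDerivAt.comp q hp0
  have A1 := H1.hasFDerivAt.comp q hp1
  have B0 := J0.hasFDerivAt.comp q hp0
  have B1 := J1.hasFDerivAt.comp q hp1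
  simp only [Function.comp_def] at A0 A1 B0 B1
  rw [((A0.fun_mul A1).fun_add (B0.fun_mul B1)).fderiv]
  fin_cases μ <;>
    simp [ContinuousLinearMap.smulRight_apply, Pi.single_apply, Function.comp] <;>
    ring

lemma fderiv_X3 (h1 h2 h3 : ℝ → ℝ) (d1 d2 d3 : ℝ) (q : Fin 4 → ℝ) (μ : Fin 4)
    (H1 : HasDerivAt h1 (d1) (q 1)) (H2 : HasDerivAt h2 d2 (q 2))
    (H3 : HasDerivAt h3 d3 (q 3)) :
    fderiv ℝ (fun p : Fin 4 → ℝ => h1 (p 1) * h2 (p 2) * h3 (p 3)) q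
      (Pi.single μ 1) =
    ![0, d1 * h2 (q 2) * h3 (q 3), h1 (q 1) * d2 * h3 (q 3),
      h1 (q 1) * h2 (q 2) * d3] μ := by
  have hp1 : HasFDerivAt (fun p : Fin 4 → ℝ => p 1)
      (ContinuousLinearMap.proj (R := ℝ) (φ := fun _ : Fin 4 => ℝ) 1) q :=
    (ContinuousLinearMap.proj (R := ℝ) (φ := fun _ : Fin 4 => ℝ) 1).hasFDerivAt
  have hp2 : HasFDerivAt (fun p : Fin 4 → ℝ => p 2)
      (ContinuousLinearMap.proj (R := ℝ) (φ := fun _ : Fin 4 => ℝ) 2) q :=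
    (ContinuousLinearMap.proj (R := ℝ) (φ := fun _ : Fin 4 => ℝ) 2).hasFDerivAt
  have hp3 : HasFDerivAt (fun p : Fin 4 → ℝ => p 3)
      (ContinuousLinearMap.proj (R := ℝ) (φ := fun _ : Fin 4 => ℝ) 3) q :=
    (ContinuousLinearMap.proj (R := ℝ) (φ := fun _ : Fin 4 => ℝ) 3).hasFDerivAt
  have A1 := H1.hasFDerivAt.comp q hp1
  have A2 := H2.hasFDerivAt.comp q hp2
  have A3 := H3.hasFDerivAt.comp q hp3
  simp only [Function.comp_def] at A1 A2 A3
  rw [((A1.fun_mul A2).fun_mul A3).fderiv]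
  fin_cases μ <;>
    simp [ContinuousLinearMap.smulRight_apply, Pi.single_apply, Function.comp] <;>
    ring

/-- directional derivatives of the metric components -/
noncomputable def Gder (k ε n : ℝ) (a b : ℝ → ℝ) (q : Fin 4 → ℝ) :
    Fin 4 → Fin 4 → Fin 4 → ℝ :=
  ![![(fun _ => 0), (fun _ => 0), (fun _ => 0), (fun _ => 0)],
    ![(fun _ => 0),
      ![2 * b (q 0) * deriv b (q 0), 0, 0, 0],
      (fun _ => 0),
      ![-(ε * q 1 * (2 * b (q 0) * deriv b (q 0))), -(ε * b (q 0) ^ 2), 0, 0]],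
    ![(fun _ => 0), (fun _ => 0),
      ![2 * a (q 0) * deriv a (q 0) * n ^ 2 * (Ffun k (q 1) + k) ^ 2 +
          2 * b (q 0) * deriv b (q 0) * Sig k (q 1) ^ 2,
        a (q 0) ^ 2 * n ^ 2 * (2 * (Ffun k (q 1) + k) * Sig k (q 1)) +
          b (q 0) ^ 2 * (2 * Sig k (q 1) * Sigr k (q 1)), 0, 0],
      ![2 * a (q 0) * deriv a (q 0) * n * (Ffun k (q 1) + k),
        a (q 0) ^ 2 * n * Sig k (q 1), 0, 0]],
    ![(fun _ => 0),
      ![-(ε * q 1 * (2 * b (q 0) * deriv b (q 0))), -(ε * b (q 0) ^ 2), 0, 0],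
      ![2 * a (q 0) * deriv a (q 0) * n * (Ffun k (q 1) + k),
        a (q 0) ^ 2 * n * Sig k (q 1), 0, 0],
      ![2 * a (q 0) * deriv a (q 0) + ε ^ 2 * q 1 ^ 2 * (2 * b (q 0) * deriv b (q 0)),
        ε ^ 2 * (2 * q 1) * b (q 0) ^ 2, 0, 0]]]

/-- directional derivatives of the vector field components -/
noncomputable def Xder (k ε n : ℝ) (q : Fin 4 → ℝ) : Fin 4 → Fin 4 → ℝ :=
  ![(fun _ => 0),
    ![0, 0, -Real.sin (q 2) * Real.exp (ε * q 3),
      Real.cos (q 2) * (Real.exp (ε * q 3) * ε)],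
    ![0, 1 / Sig k (q 1) ^ 2 * Real.sin (q 2) * Real.exp (ε * q 3),
      -(ffun k (q 1)) * Real.cos (q 2) * Real.exp (ε * q 3),
      -(ffun k (q 1)) * Real.sin (q 2) * (Real.exp (ε * q 3) * ε)],
    ![0, -(n * (Ffun k (q 1) + k) / Sig k (q 1) ^ 2) * Real.sin (q 2) *
        Real.exp (ε * q 3),
      -(gfun k n (q 1)) * Real.cos (q 2) * Real.exp (ε * q 3),
      -(gfun k n (q 1)) * Real.sin (q 2) * (Real.exp (ε * q 3) * ε)]]

end Helpers

set_option maxHeartbeats 2000000 in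
/-- `η₄` is a Killing vector field of the LRS metric `gcyl` on the region
`U = {Σ(r,k) > 0}`. -/
theorem eta4_is_killing (k ε n : ℝ)
    (hk : k = -1 ∨ k = 0 ∨ k = 1) (hε : ε = 0 ∨ ε = 1) (hn : n = 0 ∨ n = 1)
    (hεn : ε * n = 0) (hεk : ε * k = 0)
    (a b : ℝ → ℝ) (ha : ContDiff ℝ 1 a) (hb : ContDiff ℝ 1 b)
    (hapos : ∀ t, 0 < a t) (hbpos : ∀ t, 0 < b t) :
    ∀ q : Fin 4 → ℝ, 0 < Sig k (q 1) →
      IsKillingAt (gcyl k ε n a b) (eta4 k ε n) q := by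
  intro q hq
  have hS : Sig k (q 1) ≠ 0 := ne_of_gt hq
  have haD : HasDerivAt a (deriv a (q 0)) (q 0) :=
    ((ha.differentiable one_ne_zero) (q 0)).hasDerivAt
  have hbD : HasDerivAt b (deriv b (q 0)) (q 0) :=
    ((hb.differentiable one_ne_zero) (q 0)).hasDerivAt
  have c1 : ∀ x : ℝ, HasDerivAt (fun _ : ℝ => (1:ℝ)) 0 x := fun x => hasDerivAt_const x 1
  have c0 : ∀ x : ℝ, HasDerivAt (fun _ : ℝ => (0:ℝ)) 0 x := fun x => hasDerivAt_const x 0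
  have hGc : ∀ (F : (Fin 4 → ℝ) → ℝ) (c : ℝ), F = (fun _ => c) →
      ∀ μ : Fin 4, fderiv ℝ F q (Pi.single μ 1) = 0 := by
    rintro F c rfl μ
    rw [fderiv_fun_const]
    simp
  have hlin : HasDerivAt (fun x : ℝ => -(ε * x)) (-ε) (q 1) := by
    simpa using ((hasDerivAt_id (q 1)).const_mul ε).fun_neg
  have hsq : HasDerivAt (fun x : ℝ => x ^ 2) (2 * q 1) (q 1) := by
    simpa using (hasDerivAt_id (q 1)).fun_pow 2
  -- metric component derivative computations
  have hG11 : ∀ μ : Fin 4, fderiv ℝ (fun p => gcyl k ε n a b p 1 1) q (Pi.single μ 1)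
      = Gder k ε n a b q 1 1 μ := by
    intro μ
    have h := fderiv_G2 _ _ _ _ _ _ _ _ q μ (hbD.fun_pow 2) (c1 _) (c0 _) (c0 _)
    rw [show (fun p : Fin 4 → ℝ => gcyl k ε n a b p 1 1)
        = (fun p : Fin 4 → ℝ => (fun x => b x ^ 2) (p 0) * (fun _ : ℝ => (1:ℝ)) (p 1) +
            (fun _ : ℝ => (0:ℝ)) (p 0) * (fun _ : ℝ => (0:ℝ)) (p 1)) from
      funext fun p => by simp [gcyl], h]
    fin_cases μ <;> simp [Gder, Matrix.vecHead, Matrix.vecTail] <;> try ring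
  have hG13 : ∀ μ : Fin 4, fderiv ℝ (fun p => gcyl k ε n a b p 1 3) q (Pi.single μ 1)
      = Gder k ε n a b q 1 3 μ := by
    intro μ
    have h := fderiv_G2 _ _ _ _ _ _ _ _ q μ (hbD.fun_pow 2) hlin (c0 _) (c0 _)
    rw [show (fun p : Fin 4 → ℝ => gcyl k ε n a b p 1 3)
        = (fun p : Fin 4 → ℝ => (fun x => b x ^ 2) (p 0) * (fun x => -(ε * x)) (p 1) +
            (fun _ : ℝ => (0:ℝ)) (p 0) * (fun _ : ℝ => (0:ℝ)) (p 1)) from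
      funext fun p => by simp [gcyl]; try ring, h]
    fin_cases μ <;> simp [Gder, Matrix.vecHead, Matrix.vecTail] <;> try ring
  have hG31 : ∀ μ : Fin 4, fderiv ℝ (fun p => gcyl k ε n a b p 3 1) q (Pi.single μ 1)
      = Gder k ε n a b q 3 1 μ := by
    intro μ
    have h := fderiv_G2 _ _ _ _ _ _ _ _ q μ (hbD.fun_pow 2) hlin (c0 _) (c0 _)
    rw [show (fun p : Fin 4 → ℝ => gcyl k ε n a b p 3 1)
        = (fun p : Fin 4 → ℝ => (fun x => b x ^ 2) (p 0) * (fun x => -(ε * x)) (p 1) +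
            (fun _ : ℝ => (0:ℝ)) (p 0) * (fun _ : ℝ => (0:ℝ)) (p 1)) from
      funext fun p => by simp [gcyl]; try ring, h]
    fin_cases μ <;> simp [Gder, Matrix.vecHead, Matrix.vecTail] <;> try ring
  have hG22 : ∀ μ : Fin 4, fderiv ℝ (fun p => gcyl k ε n a b p 2 2) q (Pi.single μ 1)
      = Gder k ε n a b q 2 2 μ := by
    intro μ
    have h := fderiv_G2 _ _ _ _ _ _ _ _ q μ ((haD.fun_pow 2).mul_const (n ^ 2))
      (((hasDerivAt_Ffun hk (q 1)).add_const k).fun_pow 2) (hbD.fun_pow 2)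
      ((hasDerivAt_Sig hk (q 1)).fun_pow 2)
    rw [show (fun p : Fin 4 → ℝ => gcyl k ε n a b p 2 2)
        = (fun p : Fin 4 → ℝ =>
            (fun x => a x ^ 2 * n ^ 2) (p 0) * (fun x => (Ffun k x + k) ^ 2) (p 1) +
            (fun x => b x ^ 2) (p 0) * (fun x => Sig k x ^ 2) (p 1)) from
      funext fun p => by simp [gcyl]; try ring, h]
    fin_cases μ <;> simp [Gder, Matrix.vecHead, Matrix.vecTail] <;> try ring
  have hG23 : ∀ μ : Fin 4, fderiv ℝ (fun p => gcyl k ε n a b p 2 3) q (Pi.single μ 1)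
      = Gder k ε n a b q 2 3 μ := by
    intro μ
    have h := fderiv_G2 _ _ _ _ _ _ _ _ q μ ((haD.fun_pow 2).mul_const n)
      ((hasDerivAt_Ffun hk (q 1)).add_const k) (c0 _) (c0 _)
    rw [show (fun p : Fin 4 → ℝ => gcyl k ε n a b p 2 3)
        = (fun p : Fin 4 → ℝ =>
            (fun x => a x ^ 2 * n) (p 0) * (fun x => Ffun k x + k) (p 1) +
            (fun _ : ℝ => (0:ℝ)) (p 0) * (fun _ : ℝ => (0:ℝ)) (p 1)) from
      funext fun p => by simp [gcyl]; try ring, h]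
    fin_cases μ <;> simp [Gder, Matrix.vecHead, Matrix.vecTail] <;> try ring
  have hG32 : ∀ μ : Fin 4, fderiv ℝ (fun p => gcyl k ε n a b p 3 2) q (Pi.single μ 1)
      = Gder k ε n a b q 3 2 μ := by
    intro μ
    have h := fderiv_G2 _ _ _ _ _ _ _ _ q μ ((haD.fun_pow 2).mul_const n)
      ((hasDerivAt_Ffun hk (q 1)).add_const k) (c0 _) (c0 _)
    rw [show (fun p : Fin 4 → ℝ => gcyl k ε n a b p 3 2)
        = (fun p : Fin 4 → ℝ =>
            (fun x => a x ^ 2 * n) (p 0) * (fun x => Ffun k x + k) (p 1) +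
            (fun _ : ℝ => (0:ℝ)) (p 0) * (fun _ : ℝ => (0:ℝ)) (p 1)) from
      funext fun p => by simp [gcyl]; try ring, h]
    fin_cases μ <;> simp [Gder, Matrix.vecHead, Matrix.vecTail] <;> try ring
  have hG33 : ∀ μ : Fin 4, fderiv ℝ (fun p => gcyl k ε n a b p 3 3) q (Pi.single μ 1)
      = Gder k ε n a b q 3 3 μ := by
    intro μ
    have h := fderiv_G2 _ _ _ _ _ _ _ _ q μ (haD.fun_pow 2) (c1 _)
      ((hbD.fun_pow 2).const_mul (ε ^ 2)) hsq
    rw [show (fun p : Fin 4 → ℝ => gcyl k ε n a b p 3 3)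
        = (fun p : Fin 4 → ℝ =>
            (fun x => a x ^ 2) (p 0) * (fun _ : ℝ => (1:ℝ)) (p 1) +
            (fun x => ε ^ 2 * b x ^ 2) (p 0) * (fun x : ℝ => x ^ 2) (p 1)) from
      funext fun p => by simp [gcyl]; try ring, h]
    fin_cases μ <;> simp [Gder, Matrix.vecHead, Matrix.vecTail] <;> try ring
  have hG : ∀ α β μ : Fin 4, fderiv ℝ (fun p => gcyl k ε n a b p α β) q (Pi.single μ 1)
      = Gder k ε n a b q α β μ := by
    intro α β
    fin_cases α <;> fin_cases β
    exacts [fun μ => hGc _ (-1) rfl μ, fun μ => hGc _ 0 rfl μ, fun μ => hGc _ 0 rfl μ,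
      fun μ => hGc _ 0 rfl μ, fun μ => hGc _ 0 rfl μ, hG11, fun μ => hGc _ 0 rfl μ,
      hG13, fun μ => hGc _ 0 rfl μ, fun μ => hGc _ 0 rfl μ, hG22, hG23,
      fun μ => hGc _ 0 rfl μ, hG31, hG32, hG33]
  -- vector field component derivative computations
  have hexp : HasDerivAt (fun z => Real.exp (ε * z)) (Real.exp (ε * q 3) * ε) (q 3) := by
    simpa [Function.comp_def] using (Real.hasDerivAt_exp (ε * q 3)).comp (q 3) ((hasDerivAt_id (q 3)).const_mul ε)
  have hX1 : ∀ μ : Fin 4, fderiv ℝ (fun p => eta4 k ε n p 1) q (Pi.single μ 1)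
      = Xder k ε n q 1 μ := by
    intro μ
    have h := fderiv_X3 _ _ _ _ _ _ q μ (c1 _) (Real.hasDerivAt_cos (q 2)) hexp
    rw [show (fun p : Fin 4 → ℝ => eta4 k ε n p 1)
        = (fun p : Fin 4 → ℝ => (fun _ : ℝ => (1:ℝ)) (p 1) * Real.cos (p 2) *
            (fun z => Real.exp (ε * z)) (p 3)) from
      funext fun p => by simp [eta4]; try ring, h]
    fin_cases μ <;> simp [Xder, Matrix.vecHead, Matrix.vecTail] <;> try ring
  have hX2 : ∀ μ : Fin 4, fderiv ℝ (fun p => eta4 k ε n p 2) q (Pi.single μ 1)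
      = Xder k ε n q 2 μ := by
    intro μ
    have h := fderiv_X3 _ _ _ _ _ _ q μ ((hasDerivAt_ffun hk hS).fun_neg)
      (Real.hasDerivAt_sin (q 2)) hexp
    rw [show (fun p : Fin 4 → ℝ => eta4 k ε n p 2)
        = (fun p : Fin 4 → ℝ => (fun x => -(ffun k x)) (p 1) * Real.sin (p 2) *
            (fun z => Real.exp (ε * z)) (p 3)) from
      funext fun p => by simp [eta4]; try ring, h]
    fin_cases μ <;> simp [Xder, Matrix.vecHead, Matrix.vecTail] <;> try ring
  have hX3 : ∀ μ : Fin 4, fderiv ℝ (fun p => eta4 k ε n p 3) q (Pi.single μ 1)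
      = Xder k ε n q 3 μ := by
    intro μ
    have h := fderiv_X3 _ _ _ _ _ _ q μ ((hasDerivAt_gfun (n := n) hk hS).fun_neg)
      (Real.hasDerivAt_sin (q 2)) hexp
    rw [show (fun p : Fin 4 → ℝ => eta4 k ε n p 3)
        = (fun p : Fin 4 → ℝ => (fun x => -(gfun k n x)) (p 1) * Real.sin (p 2) *
            (fun z => Real.exp (ε * z)) (p 3)) from
      funext fun p => by simp [eta4]; try ring, h]
    fin_cases μ <;> simp [Xder, Matrix.vecHead, Matrix.vecTail] <;> try ring
  have hX : ∀ i μ : Fin 4, fderiv ℝ (fun p => eta4 k ε n p i) q (Pi.single μ 1)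
      = Xder k ε n q i μ := by
    intro i
    fin_cases i
    exacts [fun μ => hGc _ 0 rfl μ, hX1, hX2, hX3]
  clear hG11 hG13 hG31 hG22 hG23 hG32 hG33 hX1 hX2 hX3 hGc
  rcases hε with rfl | rfl
  · intro α β
    rw [Fin.sum_univ_four]
    simp only [hG, hX]
    fin_cases α <;> fin_cases β <;>
      · try simp [Gder, Xder, gcyl, eta4, ffun, gfun, Matrix.vecHead, Matrix.vecTail]
        try field_simp
        try ring
  · obtain rfl : n = 0 := by simpa using hεn
    obtain rfl : k = 0 := by simpa using hεk
    simp only [Sig] at hS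
    norm_num at hS
    intro α β
    rw [Fin.sum_univ_four]
    simp only [hG, hX]
    fin_cases α <;> fin_cases β <;>
      · try simp [Gder, Xder, gcyl, eta4, ffun, gfun, Sig, Sigr, Ffun, Matrix.vecHead,
          Matrix.vecTail]
        try field_simp
        try ring
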